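/- Let G be a simple graph on n vertices, let t ≥ 2 be an integer, and let c be a cost vector of nonnegative reals. If G' is a spanning subgraph of G, then θ_t(G, c) ≤ θ_t(G', c) + c_t · |E(G) \ E(G')| · n^{t-2} and π_t(G, c) ≤ π_t(G', c) + c_t · |E(G) \ E(G')| · n^{t-2}. -/

import Mathlib

open scoped Classical
open Finset

/-- `K` is a clique of `G`: a nonempty set of pairwise adjacent vertices. -/
def IsCliqueOf {V : Type} [Fintype V] [DecidableEq V] (G : SimpleGraph V) (K : Finset V) : Prop :=
  K.Nonempty ∧ G.IsClique (K : Set V)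

/-- Total `c`-cost of a weighting `f` of the finsets of vertices. -/
noncomputable def cliqueCost {V : Type} [Fintype V] [DecidableEq V]
    (c : ℕ → ℝ) (f : Finset V → ℝ) : ℝ :=
  ∑ K : Finset V, c K.card * f K

/-- `f` is a fractional `t`-clique cover of `G`. -/
def IsFracCover {V : Type} [Fintype V] [DecidableEq V]
    (t : ℕ) (G : SimpleGraph V) (f : Finset V → ℝ) : Prop :=
  (∀ K, 0 ≤ f K) ∧ (∀ K, ¬ IsCliqueOf G K → f K = 0) ∧
  ∀ T : Finset V, T.card = t → G.IsClique (T : Set V) →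
    1 ≤ ∑ K ∈ Finset.univ.filter (fun K => T ⊆ K), f K

/-- `f` is a fractional `t`-clique decomposition of `G`. -/
def IsFracDecomp {V : Type} [Fintype V] [DecidableEq V]
    (t : ℕ) (G : SimpleGraph V) (f : Finset V → ℝ) : Prop :=
  (∀ K, 0 ≤ f K) ∧ (∀ K, ¬ IsCliqueOf G K → f K = 0) ∧
  ∀ T : Finset V, T.card = t → G.IsClique (T : Set V) →
    ∑ K ∈ Finset.univ.filter (fun K => T ⊆ K), f K = 1

/-- `f` is an integer (`{0,1}`-valued) `t`-clique cover of `G`. -/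
def IsIntCover {V : Type} [Fintype V] [DecidableEq V]
    (t : ℕ) (G : SimpleGraph V) (f : Finset V → ℝ) : Prop :=
  IsFracCover t G f ∧ ∀ K, f K = 0 ∨ f K = 1

/-- `f` is an integer (`{0,1}`-valued) `t`-clique decomposition of `G`. -/
def IsIntDecomp {V : Type} [Fintype V] [DecidableEq V]
    (t : ℕ) (G : SimpleGraph V) (f : Finset V → ℝ) : Prop :=
  IsFracDecomp t G f ∧ ∀ K, f K = 0 ∨ f K = 1

/-- θ*_t(G,c): minimum total c-cost of a fractional t-clique cover. -/
noncomputable def thetaFrac {V : Type} [Fintype V] [DecidableEq V]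
    (t : ℕ) (G : SimpleGraph V) (c : ℕ → ℝ) : ℝ :=
  sInf { x | ∃ f, IsFracCover t G f ∧ x = cliqueCost c f }

/-- θ_t(G,c): minimum total c-cost of an integer t-clique cover. -/
noncomputable def thetaInt {V : Type} [Fintype V] [DecidableEq V]
    (t : ℕ) (G : SimpleGraph V) (c : ℕ → ℝ) : ℝ :=
  sInf { x | ∃ f, IsIntCover t G f ∧ x = cliqueCost c f }

/-- π*_t(G,c): minimum total c-cost of a fractional t-clique decomposition. -/
noncomputable def piFrac {V : Type} [Fintype V] [DecidableEq V]
    (t : ℕ) (G : SimpleGraph V) (c : ℕ → ℝ) : ℝ :=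
  sInf { x | ∃ f, IsFracDecomp t G f ∧ x = cliqueCost c f }

/-- π_t(G,c): minimum total c-cost of an integer t-clique decomposition. -/
noncomputable def piInt {V : Type} [Fintype V] [DecidableEq V]
    (t : ℕ) (G : SimpleGraph V) (c : ℕ → ℝ) : ℝ :=
  sInf { x | ∃ f, IsIntDecomp t G f ∧ x = cliqueCost c f }

/-- `G` is complete multipartite: vertices can be assigned to parts so that
adjacency holds exactly between distinct parts. -/
def IsCompleteMultipartite {V : Type} [Fintype V] [DecidableEq V]
    (G : SimpleGraph V) : Prop :=
  ∃ p : V → ℕ, ∀ u v, G.Adj u v ↔ p u ≠ p v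

lemma helperInf (A B : Set ℝ) (b : ℝ) (hBne : B.Nonempty) (hA : BddBelow A)
    (h : ∀ x ∈ B, ∃ y ∈ A, y ≤ x + b) : sInf A ≤ sInf B + b := by
  rw [← sub_le_iff_le_add]
  apply le_csInf hBne
  intro x hx
  obtain ⟨y, hy, hyx⟩ := h x hx
  have := csInf_le hA hy
  linarith

lemma costNonneg {V : Type} [Fintype V] [DecidableEq V] (c : ℕ → ℝ)
    (hc : ∀ i, 1 ≤ i → 0 ≤ c i) (G : SimpleGraph V) (f : Finset V → ℝ)
    (h0 : ∀ K, 0 ≤ f K) (hv : ∀ K, ¬ IsCliqueOf G K → f K = 0) :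
    0 ≤ cliqueCost c f := by
  apply Finset.sum_nonneg
  intro K _
  rcases Nat.eq_zero_or_pos K.card with h | h
  · have hK : K = ∅ := Finset.card_eq_zero.mp h
    have : f K = 0 := hv K (by rintro ⟨hne, -⟩; simp [hK] at hne)
    simp [this]
  · exact mul_nonneg (hc _ h) (h0 K)

/-- Lemma 4.7: deleting edges changes the integer `t`-clique cover and
decomposition numbers by at most `c_t |E(G) \ E(G')| n^{t-2}`. -/
theorem stmt14 (n t : ℕ) (ht : 2 ≤ t) (c : ℕ → ℝ) (hc : ∀ i, 1 ≤ i → 0 ≤ c i)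
    (G G' : SimpleGraph (Fin n)) (hsub : G' ≤ G) :
    thetaInt t G c ≤ thetaInt t G' c +
      c t * ((G.edgeSet \ G'.edgeSet).ncard : ℝ) * (n : ℝ) ^ (t - 2) ∧
    piInt t G c ≤ piInt t G' c +
      c t * ((G.edgeSet \ G'.edgeSet).ncard : ℝ) * (n : ℝ) ^ (t - 2) := by
  have hct : 0 ≤ c t := hc t (by omega)
  -- the set of "bad" t-cliques
  set S : Finset (Finset (Fin n)) :=
    univ.filter (fun K => K.card = t ∧ G.IsClique (K : Set (Fin n)) ∧
      ¬ G'.IsClique (K : Set (Fin n))) with hSdef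
  have hSmem : ∀ K, K ∈ S ↔ K.card = t ∧ G.IsClique (K : Set (Fin n)) ∧
      ¬ G'.IsClique (K : Set (Fin n)) := by
    intro K; simp [hSdef]
  -- counting bound on S
  have hScard : (S.card : ℝ) ≤ ((G.edgeSet \ G'.edgeSet).ncard : ℝ) * (n : ℝ) ^ (t - 2) := by
    set Efin : Finset (Sym2 (Fin n)) := (G.edgeSet \ G'.edgeSet).toFinset with hEdef
    have hE : (G.edgeSet \ G'.edgeSet).ncard = Efin.card :=
      Set.ncard_eq_toFinset_card' _
    have hex : ∀ K ∈ S, ∃ p : Fin n × Fin n,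
        p.1 ∈ K ∧ p.2 ∈ K ∧ G.Adj p.1 p.2 ∧ ¬ G'.Adj p.1 p.2 := by
      intro K hK
      rw [hSmem] at hK
      obtain ⟨hcard, hG, hG'⟩ := hK
      rw [SimpleGraph.isClique_iff, Set.Pairwise] at hG'
      push_neg at hG'
      obtain ⟨u, hu, v, hv, hne, hnadj⟩ := hG'
      exact ⟨(u, v), by simpa using hu, by simpa using hv,
        hG hu hv hne, hnadj⟩
    have hnat : S.card ≤ Efin.card * n.choose (t - 2) := by
      classical
      have := Finset.card_le_card_of_injOn
        (f := fun KK : {K // K ∈ S} =>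
          ((s((hex KK.1 KK.2).choose.1, (hex KK.1 KK.2).choose.2) : Sym2 (Fin n)),
            KK.1 \ {(hex KK.1 KK.2).choose.1, (hex KK.1 KK.2).choose.2}))
        (s := S.attach)
        (t := Efin ×ˢ Finset.powersetCard (t - 2) (univ : Finset (Fin n)))
        ?_ ?_
      · calc S.card = S.attach.card := (Finset.card_attach).symm
          _ ≤ (Efin ×ˢ Finset.powersetCard (t - 2) (univ : Finset (Fin n))).card := this
          _ = Efin.card * n.choose (t - 2) := by
              rw [Finset.card_product, Finset.card_powersetCard, Finset.card_univ,
                Fintype.card_fin]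
      · rintro ⟨K, hK⟩ -
        obtain ⟨hu, hv, hadj, hnadj⟩ := (hex K hK).choose_spec
        set u := (hex K hK).choose.1
        set v := (hex K hK).choose.2
        have huv : u ≠ v := hadj.ne
        rw [Finset.mem_coe, Finset.mem_product]
        constructor
        · rw [hEdef, Set.mem_toFinset]
          exact ⟨hadj, fun h => hnadj h⟩
        · rw [Finset.mem_powersetCard]
          refine ⟨Finset.subset_univ _, ?_⟩
          have hsubK : ({u, v} : Finset (Fin n)) ⊆ K := by
            intro x hx
            rcases Finset.mem_insert.mp hx with rfl | hx
            · exact hu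
            · rw [Finset.mem_singleton] at hx; exact hx ▸ hv
          have hcard2 : ({u, v} : Finset (Fin n)).card = 2 := by
            rw [Finset.card_insert_of_notMem (by simp [huv]), Finset.card_singleton]
          rw [Finset.card_sdiff_of_subset hsubK, hcard2, ((hSmem K).mp hK).1]
      · rintro ⟨K1, hK1⟩ - ⟨K2, hK2⟩ - heq
        obtain ⟨hu1, hv1, hadj1, -⟩ := (hex K1 hK1).choose_spec
        obtain ⟨hu2, hv2, hadj2, -⟩ := (hex K2 hK2).choose_spec
        set u1 := (hex K1 hK1).choose.1
        set v1 := (hex K1 hK1).choose.2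
        set u2 := (hex K2 hK2).choose.1
        set v2 := (hex K2 hK2).choose.2
        simp only [Prod.mk.injEq] at heq
        obtain ⟨hse, hde⟩ := heq
        have hpairs : ({u1, v1} : Finset (Fin n)) = {u2, v2} := by
          rcases Sym2.eq_iff.mp hse with ⟨h1, h2⟩ | ⟨h1, h2⟩
          · rw [show u1 = u2 from h1, show v1 = v2 from h2]
          · rw [show u1 = v2 from h1, show v1 = u2 from h2]
            exact Finset.pair_comm _ _
        have hsub1 : ({u1, v1} : Finset (Fin n)) ⊆ K1 := by
          intro x hx
          rcases Finset.mem_insert.mp hx with rfl | hx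
          · exact hu1
          · rw [Finset.mem_singleton] at hx; exact hx ▸ hv1
        have hsub2 : ({u2, v2} : Finset (Fin n)) ⊆ K2 := by
          intro x hx
          rcases Finset.mem_insert.mp hx with rfl | hx
          · exact hu2
          · rw [Finset.mem_singleton] at hx; exact hx ▸ hv2
        have : K1 = K2 := by
          have e1 : K1 \ {u1, v1} ∪ {u1, v1} = K1 := Finset.sdiff_union_of_subset hsub1
          have e2 : K2 \ {u2, v2} ∪ {u2, v2} = K2 := Finset.sdiff_union_of_subset hsub2
          rw [← e1, ← e2, hde, hpairs]
        exact Subtype.ext this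
    have hnat2 : S.card ≤ Efin.card * n ^ (t - 2) :=
      hnat.trans (Nat.mul_le_mul_left _ (Nat.choose_le_pow _ _))
    calc (S.card : ℝ) ≤ ((Efin.card * n ^ (t - 2) : ℕ) : ℝ) := by exact_mod_cast hnat2
      _ = ((G.edgeSet \ G'.edgeSet).ncard : ℝ) * (n : ℝ) ^ (t - 2) := by
          rw [hE]; push_cast; ring
  -- indicator of S
  set g : Finset (Fin n) → ℝ := fun K => if K ∈ S then 1 else 0 with hgdef
  have hg0 : ∀ K, 0 ≤ g K := fun K => by rw [hgdef]; positivity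
  have hgS : ∀ K ∈ S, g K = 1 := fun K hK => by simp [hgdef, hK]
  have hgnS : ∀ K, K ∉ S → g K = 0 := fun K hK => by simp [hgdef, hK]
  -- cost formula
  have hg_cost : ∀ f' : Finset (Fin n) → ℝ,
      cliqueCost c (fun K => f' K + g K) = cliqueCost c f' + c t * S.card := by
    intro f'
    unfold cliqueCost
    have step1 : ∑ K : Finset (Fin n), c K.card * (f' K + g K)
        = ∑ K : Finset (Fin n), (c K.card * f' K + c K.card * g K) :=
      Finset.sum_congr rfl (fun K _ => by ring)
    rw [step1, Finset.sum_add_distrib]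
    congr 1
    have : ∀ K : Finset (Fin n), c K.card * g K = if K ∈ S then c t else 0 := by
      intro K
      by_cases hK : K ∈ S
      · rw [hgS K hK, mul_one, if_pos hK, ((hSmem K).mp hK).1]
      · rw [hgnS K hK, mul_zero, if_neg hK]
    rw [Finset.sum_congr rfl (fun K _ => this K), Finset.sum_ite_mem,
      Finset.univ_inter, Finset.sum_const, nsmul_eq_mul, mul_comm]
  -- transfer lemmas
  have hcliqueOf : ∀ K, K ∈ S → IsCliqueOf G K := by
    intro K hK
    obtain ⟨hcard, hG, -⟩ := (hSmem K).mp hK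
    exact ⟨Finset.card_pos.mp (by omega), hG⟩
  have hf'S : ∀ (f' : Finset (Fin n) → ℝ), (∀ K, ¬ IsCliqueOf G' K → f' K = 0) →
      ∀ K ∈ S, f' K = 0 := by
    intro f' hv K hK
    obtain ⟨-, -, hnG'⟩ := (hSmem K).mp hK
    exact hv K (fun h => hnG' h.2)
  have hNotCliqueG : ∀ (f' : Finset (Fin n) → ℝ), (∀ K, ¬ IsCliqueOf G' K → f' K = 0) →
      ∀ K, ¬ IsCliqueOf G K → f' K + g K = 0 := by
    intro f' hv K hK
    have h1 : f' K = 0 := hv K (fun ⟨hne, hcl⟩ => hK ⟨hne, hcl.mono hsub⟩)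
    have h2 : g K = 0 := hgnS K (fun hKS => hK (hcliqueOf K hKS))
    rw [h1, h2, add_zero]
  have hbin : ∀ (f' : Finset (Fin n) → ℝ), (∀ K, ¬ IsCliqueOf G' K → f' K = 0) →
      (∀ K, f' K = 0 ∨ f' K = 1) → ∀ K, f' K + g K = 0 ∨ f' K + g K = 1 := by
    intro f' hv hb K
    by_cases hK : K ∈ S
    · right; rw [hf'S f' hv K hK, hgS K hK, zero_add]
    · rw [hgnS K hK, add_zero]; exact hb K
  -- sum of g over supersets of a t-clique T
  have hgsum_zero : ∀ T : Finset (Fin n), T.card = t → G'.IsClique (T : Set (Fin n)) →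
      ∑ K ∈ Finset.univ.filter (fun K => T ⊆ K), g K = 0 := by
    intro T hT hTG'
    apply Finset.sum_eq_zero
    intro K hK
    rw [Finset.mem_filter] at hK
    apply hgnS
    intro hKS
    obtain ⟨hcard, -, hnG'⟩ := (hSmem K).mp hKS
    have : T = K := Finset.eq_of_subset_of_card_le hK.2 (by omega)
    exact hnG' (this ▸ hTG')
  have hgsum_one : ∀ T : Finset (Fin n), T ∈ S →
      ∑ K ∈ Finset.univ.filter (fun K => T ⊆ K), g K = 1 := by
    intro T hT
    rw [Finset.sum_eq_single_of_mem T (by simp)]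
    · exact hgS T hT
    · intro K hK hKne
      rw [Finset.mem_filter] at hK
      apply hgnS
      intro hKS
      have hcard : K.card = t := ((hSmem K).mp hKS).1
      have hTcard : T.card = t := ((hSmem T).mp hT).1
      exact hKne (Finset.eq_of_subset_of_card_le hK.2 (by omega)).symm
  have hf'sum_zero : ∀ (f' : Finset (Fin n) → ℝ), (∀ K, ¬ IsCliqueOf G' K → f' K = 0) →
      ∀ T : Finset (Fin n), ¬ G'.IsClique (T : Set (Fin n)) →
      ∑ K ∈ Finset.univ.filter (fun K => T ⊆ K), f' K = 0 := by
    intro f' hv T hnT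
    apply Finset.sum_eq_zero
    intro K hK
    rw [Finset.mem_filter] at hK
    apply hv
    rintro ⟨-, hKcl⟩
    exact hnT (hKcl.subset (Finset.coe_subset.mpr hK.2))
  have transfer_cover : ∀ f', IsIntCover t G' f' → IsIntCover t G (fun K => f' K + g K) := by
    rintro f' ⟨⟨h0, hv, hcov⟩, hb⟩
    refine ⟨⟨fun K => add_nonneg (h0 K) (hg0 K), hNotCliqueG f' hv, ?_⟩, hbin f' hv hb⟩
    intro T hT hTG
    by_cases hTG' : G'.IsClique (T : Set (Fin n))
    · calc (1:ℝ) ≤ ∑ K ∈ Finset.univ.filter (fun K => T ⊆ K), f' K := hcov T hT hTG'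
        _ ≤ ∑ K ∈ Finset.univ.filter (fun K => T ⊆ K), (f' K + g K) :=
          Finset.sum_le_sum (fun K _ => le_add_of_nonneg_right (hg0 K))
    · have hTS : T ∈ S := (hSmem T).mpr ⟨hT, hTG, hTG'⟩
      rw [Finset.sum_add_distrib, hgsum_one T hTS]
      have : 0 ≤ ∑ K ∈ Finset.univ.filter (fun K => T ⊆ K), f' K :=
        Finset.sum_nonneg (fun K _ => h0 K)
      linarith
  have transfer_decomp : ∀ f', IsIntDecomp t G' f' → IsIntDecomp t G (fun K => f' K + g K) := by
    rintro f' ⟨⟨h0, hv, hdec⟩, hb⟩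
    refine ⟨⟨fun K => add_nonneg (h0 K) (hg0 K), hNotCliqueG f' hv, ?_⟩, hbin f' hv hb⟩
    intro T hT hTG
    rw [Finset.sum_add_distrib]
    by_cases hTG' : G'.IsClique (T : Set (Fin n))
    · rw [hdec T hT hTG', hgsum_zero T hT hTG', add_zero]
    · have hTS : T ∈ S := (hSmem T).mpr ⟨hT, hTG, hTG'⟩
      rw [hf'sum_zero f' hv T hTG', hgsum_one T hTS, zero_add]
  -- existence of an integer decomposition/cover for G'
  set f0 : Finset (Fin n) → ℝ :=
    fun K => if K.card = t ∧ G'.IsClique (K : Set (Fin n)) then 1 else 0 with hf0def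
  have hf0dec : IsIntDecomp t G' f0 := by
    refine ⟨⟨fun K => by rw [hf0def]; positivity, ?_, ?_⟩, fun K => by
      by_cases h : K.card = t ∧ G'.IsClique (K : Set (Fin n)) <;> simp [hf0def, h]⟩
    · intro K hK
      rw [hf0def]
      simp only [ite_eq_right_iff, one_ne_zero]
      rintro ⟨hcard, hcl⟩
      exact absurd ⟨Finset.card_pos.mp (by omega), hcl⟩ hK
    · intro T hT hTG'
      rw [Finset.sum_eq_single_of_mem T (by simp)]
      · rw [hf0def]; simp [hT, hTG']
      · intro K hK hKne
        rw [Finset.mem_filter] at hK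
        rw [hf0def]
        simp only [ite_eq_right_iff, one_ne_zero]
        rintro ⟨hcard, -⟩
        exact hKne (Finset.eq_of_subset_of_card_le hK.2 (by omega)).symm
  have hf0cov : IsIntCover t G' f0 :=
    ⟨⟨hf0dec.1.1, hf0dec.1.2.1, fun T hT hTG' => (hf0dec.1.2.2 T hT hTG').ge⟩, hf0dec.2⟩
  -- bounded below
  have hbddC : BddBelow { x | ∃ f, IsIntCover t G f ∧ x = cliqueCost c f } := by
    refine ⟨0, ?_⟩
    rintro x ⟨f, hf, rfl⟩
    exact costNonneg c hc G f hf.1.1 hf.1.2.1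
  have hbddD : BddBelow { x | ∃ f, IsIntDecomp t G f ∧ x = cliqueCost c f } := by
    refine ⟨0, ?_⟩
    rintro x ⟨f, hf, rfl⟩
    exact costNonneg c hc G f hf.1.1 hf.1.2.1
  have hbound : ∀ f' : Finset (Fin n) → ℝ,
      cliqueCost c (fun K => f' K + g K) ≤ cliqueCost c f' +
        c t * ((G.edgeSet \ G'.edgeSet).ncard : ℝ) * (n : ℝ) ^ (t - 2) := by
    intro f'
    rw [hg_cost f']
    have := mul_le_mul_of_nonneg_left hScard hct
    linarith
  constructor
  · unfold thetaInt
    refine helperInf _ _ _ ?_ hbddC ?_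
    · exact ⟨cliqueCost c f0, ⟨f0, hf0cov, rfl⟩⟩
    · rintro x ⟨f', hf', rfl⟩
      exact ⟨cliqueCost c (fun K => f' K + g K),
        ⟨_, transfer_cover f' hf', rfl⟩, hbound f'⟩
  · unfold piInt
    refine helperInf _ _ _ ?_ hbddD ?_
    · exact ⟨cliqueCost c f0, ⟨f0, hf0dec, rfl⟩⟩
    · rintro x ⟨f', hf', rfl⟩
      exact ⟨cliqueCost c (fun K => f' K + g K),
        ⟨_, transfer_decomp f' hf', rfl⟩, hbound f'⟩
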